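/- Let i ∈ 𝕊² and (k,l) ∈ T. Then the operator S_{k,l} : A_i(𝔹⁴) → HL(D), defined by S_{k,l}[f] := ((D₁[f,k,l] D₂[f,k,l]; D₃[f,k,l] D₄[f,k,l]), (k,l)), is continuous from (A_i(𝔹⁴), ‖·‖_{A_i}) to (HL(D), d). -/

import Mathlib

noncomputable section

open MeasureTheory Filter

notation "ℍ" => Quaternion ℝ

/-- The set of pure imaginary unit quaternions `𝕊²`. -/
def Sph2 (i : ℍ) : Prop := i.re = 0 ∧ ‖i‖ = 1

/-- Ordered pairs of orthogonal pure imaginary unit quaternions (the set `T`). -/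
def OrthPair (i j : ℍ) : Prop := Sph2 i ∧ Sph2 j ∧ (i * star j).re = 0

/-- The slice complex plane `ℂ(i) = {x + y i}`. -/
def CC (i : ℍ) : Set ℍ := {q | ∃ x y : ℝ, q = (x : ℍ) + y • i}

/-- Slice regularity of `f` on `Ω`: real differentiability together with the
Cauchy–Riemann condition `½(∂/∂x + i ∂/∂y) f = 0` on every slice. -/
def SliceRegularOn (f : ℍ → ℍ) (Ω : Set ℍ) : Prop :=
  ∀ ⦃i : ℍ⦄, Sph2 i → ∀ x y : ℝ, ((x : ℍ) + y • i) ∈ Ω →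
    DifferentiableAt ℝ f ((x : ℍ) + y • i) ∧
    fderiv ℝ f ((x : ℍ) + y • i) 1 + i * fderiv ℝ f ((x : ℍ) + y • i) i = 0

/-- Axially symmetric slice domain. -/
structure AxSymSDomain (Ω : Set ℍ) : Prop where
  isOpen : IsOpen Ω
  isConnected : IsConnected Ω
  real_nonempty : (Ω ∩ Set.range ((↑) : ℝ → ℍ)).Nonempty
  slice_connected : ∀ ⦃i : ℍ⦄, Sph2 i →
    IsConnected {p : ℝ × ℝ | ((p.1 : ℍ) + p.2 • i) ∈ Ω}
  axial : ∀ (x y : ℝ) ⦃i : ℍ⦄, Sph2 i → ((x : ℍ) + y • i) ∈ Ω →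
    ∀ ⦃j : ℍ⦄, Sph2 j → ((x : ℍ) + y • j) ∈ Ω

/-- The slice `Ω ∩ ℂ(i)` as a subset of `ℝ²`. -/
def sliceSet (Ω : Set ℍ) (i : ℍ) : Set (ℝ × ℝ) := {p | ((p.1 : ℍ) + p.2 • i) ∈ Ω}

/-- `‖f‖²_{A_i(Ω)} = ∫_{Ω ∩ ℂ(i)} ‖f‖² dσ_i`. -/
def bergmanNormSq (Ω : Set ℍ) (i : ℍ) (f : ℍ → ℍ) : ℝ :=
  ∫ p in sliceSet Ω i, ‖f ((p.1 : ℍ) + p.2 • i)‖ ^ 2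

/-- The slice regular Bergman norm `‖f‖_{A_i(Ω)}`. -/
def bergmanNorm (Ω : Set ℍ) (i : ℍ) (f : ℍ → ℍ) : ℝ :=
  Real.sqrt (bergmanNormSq Ω i f)

/-- Membership in the slice regular Bergman space `A_i(Ω)`. -/
def MemBergman (Ω : Set ℍ) (i : ℍ) (f : ℍ → ℍ) : Prop :=
  SliceRegularOn f Ω ∧
  IntegrableOn (fun p : ℝ × ℝ => ‖f ((p.1 : ℍ) + p.2 • i)‖ ^ 2) (sliceSet Ω i)

/-- The quaternionic Bergman inner product `⟨f,g⟩ = ∫ conj(f) g dσ_i`. -/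
def bergmanInner (Ω : Set ℍ) (i : ℍ) (f g : ℍ → ℍ) : ℍ :=
  ∫ p in sliceSet Ω i, star (f ((p.1 : ℍ) + p.2 • i)) * g ((p.1 : ℍ) + p.2 • i)

/-- The open unit ball `𝔹⁴ ⊆ ℍ`. -/
def B4 : Set ℍ := {q | ‖q‖ < 1}

/-- The open unit disk `D ⊆ ℝ²`. -/
def unitDisk : Set (ℝ × ℝ) := {p | p.1 ^ 2 + p.2 ^ 2 < 1}

/-- `‖f‖²_{A_i(𝔹⁴)} = ∫_D ‖f(x + yi)‖² dμ(x,y)`. -/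
def bergNormSqB (i : ℍ) (f : ℍ → ℍ) : ℝ :=
  ∫ p in unitDisk, ‖f ((p.1 : ℍ) + p.2 • i)‖ ^ 2

/-- The Bergman norm on `A_i(𝔹⁴)`. -/
def bergNormB (i : ℍ) (f : ℍ → ℍ) : ℝ := Real.sqrt (bergNormSqB i f)

/-- Membership in `A_i(𝔹⁴)`. -/
def MemBergB (i : ℍ) (f : ℍ → ℍ) : Prop :=
  SliceRegularOn f B4 ∧
  IntegrableOn (fun p : ℝ × ℝ => ‖f ((p.1 : ℍ) + p.2 • i)‖ ^ 2) unitDisk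

open Classical in
/-- `I_q`: the imaginary unit direction of `q` (an arbitrary fixed unit when `q` is real). -/
def Imu (q : ℍ) : ℍ := if q.im = 0 then ⟨0, 1, 0, 0⟩ else ‖q.im‖⁻¹ • q.im

/-- The extension operator `P_{k,·}`: for a slice function `g : ℝ² → ℍ` (representing
`x + y k ↦ g(x,y)`), `Pext k g (q) = ½[(1 + I_q k) g(x, −y) + (1 − I_q k) g(x, y)]`
where `q = x + I_q y`, `y = ‖im q‖ ≥ 0`. -/
def Pext (k : ℍ) (g : ℝ × ℝ → ℍ) (q : ℍ) : ℍ :=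
  (2⁻¹ : ℝ) • ((1 + Imu q * k) * g (q.re, -‖q.im‖) + (1 - Imu q * k) * g (q.re, ‖q.im‖))

/-- The slice function `x + y k ↦ a + b k + c l + d kl`. -/
def sliceFun (a b c d : ℝ × ℝ → ℝ) (k l : ℍ) (p : ℝ × ℝ) : ℍ :=
  (a p : ℍ) + b p • k + c p • l + d p • (k * l)

/-- `L²(D)` norm of a real function on the unit disk. -/
def L2D (a : ℝ × ℝ → ℝ) : ℝ := Real.sqrt (∫ p in unitDisk, a p ^ 2)

/-- Finiteness of the `L²(D)` norm. -/
def MemL2D (a : ℝ × ℝ → ℝ) : Prop := IntegrableOn (fun p => a p ^ 2) unitDisk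

/-- Harmonicity on the unit disk: `a` is `C²` and `∂²a/∂x² + ∂²a/∂y² = 0`. -/
def HarmonicOnDisk (a : ℝ × ℝ → ℝ) : Prop :=
  ContDiffOn ℝ 2 a unitDisk ∧ ∀ p ∈ unitDisk,
    fderiv ℝ (fun q => fderiv ℝ a q (1, 0)) p (1, 0)
      + fderiv ℝ (fun q => fderiv ℝ a q (0, 1)) p (0, 1) = 0

/-- `(a,b)` is a pair of conjugate harmonic functions on `D`:
both harmonic and satisfying the Cauchy–Riemann equations. -/
def ConjHarmPair (a b : ℝ × ℝ → ℝ) : Prop :=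
  HarmonicOnDisk a ∧ HarmonicOnDisk b ∧
  ∀ p ∈ unitDisk,
    fderiv ℝ a p (1, 0) = fderiv ℝ b p (0, 1) ∧
    fderiv ℝ a p (0, 1) = -fderiv ℝ b p (1, 0)

/-- `(a,b) ∈ HL²(D)`. -/
def HLpair (a b : ℝ × ℝ → ℝ) : Prop := ConjHarmPair a b ∧ MemL2D a ∧ MemL2D b

/-- Raw data of an element of `HL(D)`: a 2×2 matrix `(a b; c d)` of real functions
on the disk together with a pair `(k,l)` of quaternions. -/
structure HLElem where
  a : ℝ × ℝ → ℝ
  b : ℝ × ℝ → ℝ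
  c : ℝ × ℝ → ℝ
  d : ℝ × ℝ → ℝ
  k : ℍ
  l : ℍ

/-- Membership in `HL(D)`: `(a,b),(c,d) ∈ HL²(D)` and `(k,l) ∈ T`. -/
def HLElem.mem (A : HLElem) : Prop := HLpair A.a A.b ∧ HLpair A.c A.d ∧ OrthPair A.k A.l

/-- The bundle projection `P_{𝔹⁴}((a b; c d),(k,l)) = P_{k,l}[a + bk + cl + dkl]`. -/
def HLElem.proj (A : HLElem) : ℍ → ℍ := Pext A.k (sliceFun A.a A.b A.c A.d A.k A.l)

/-- The metric of `HL(D)`. -/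
def HLdist (A B : HLElem) : ℝ :=
  L2D (A.a - B.a) + L2D (A.b - B.b) + L2D (A.c - B.c) + L2D (A.d - B.d)
    + Real.sqrt (‖A.k - B.k‖ ^ 2 + ‖A.l - B.l‖ ^ 2)

/-- `Q_{k,l}[f] : (x,y) ↦ f(x + y k)`, the restriction of `f` to the slice `ℂ(k)`. -/
def Qsl (f : ℍ → ℍ) (k : ℍ) (p : ℝ × ℝ) : ℍ := f ((p.1 : ℍ) + p.2 • k)

/-- `D₁[f,k,l] = (Q[f] + conj(Q[f]))/2 = Re (Q[f])`. -/
def Dc1 (f : ℍ → ℍ) (k _l : ℍ) (p : ℝ × ℝ) : ℝ := (Qsl f k p).re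

/-- `D₂[f,k,l] = −(Q[f]·k + conj(Q[f]·k))/2 = −Re (Q[f]·k)`. -/
def Dc2 (f : ℍ → ℍ) (k _l : ℍ) (p : ℝ × ℝ) : ℝ := -(Qsl f k p * k).re

/-- `D₃[f,k,l] = −(Q[f]·l + conj(Q[f]·l))/2 = −Re (Q[f]·l)`. -/
def Dc3 (f : ℍ → ℍ) (k l : ℍ) (p : ℝ × ℝ) : ℝ := -(Qsl f k p * l).re

/-- `D₄[f,k,l] = (Q[f]·lk + conj(Q[f]·lk))/2 = Re (Q[f]·(lk))`. -/
def Dc4 (f : ℍ → ℍ) (k l : ℍ) (p : ℝ × ℝ) : ℝ := (Qsl f k p * (l * k)).re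

/-- The section map `S_{k,l}[f] = ((D₁ D₂; D₃ D₄), (k,l))`. -/
def Smap (f : ℍ → ℍ) (k l : ℍ) : HLElem :=
  ⟨Dc1 f k l, Dc2 f k l, Dc3 f k l, Dc4 f k l, k, l⟩

/-- The metric `ρ_i` on `A_i(𝔹⁴) × T`. -/
def rhoA (i : ℍ) (f : ℍ → ℍ) (k l : ℍ) (g : ℍ → ℍ) (m n : ℍ) : ℝ :=
  bergNormB i (f - g) + Real.sqrt (‖k - m‖ ^ 2 + ‖l - n‖ ^ 2)


lemma re_mul_comm (a b : ℍ) : (a * b).re = (b * a).re := by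
  simp only [Quaternion.re_mul]; ring

lemma Sph2.normSq_eq {j : ℍ} (hj : Sph2 j) : Quaternion.normSq j = 1 := by
  rw [Quaternion.normSq_eq_norm_mul_self, hj.2, one_mul]

lemma Sph2.mul_self {j : ℍ} (hj : Sph2 j) : j * j = -1 := by
  have hs : star j = -j := by
    ext <;> simp [hj.1]
  have := Quaternion.self_mul_star j
  rw [hs, mul_neg, hj.normSq_eq] at this
  have h2 : -(j*j) = ((1:ℝ):ℍ) := this
  have h3 : j * j = -((1:ℝ):ℍ) := by rw [← h2, neg_neg]
  simpa using h3

lemma Sph2.sum_sq {j : ℍ} (hj : Sph2 j) : j.imI^2 + j.imJ^2 + j.imK^2 = 1 := by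
  have := hj.normSq_eq
  rw [Quaternion.normSq_def'] at this
  rw [hj.1] at this; linarith [this]

lemma normSq_slice {j : ℍ} (hj : Sph2 j) (x y : ℝ) :
    Quaternion.normSq ((x : ℍ) + y • j) = x^2 + y^2 := by
  have h1 := hj.sum_sq
  rw [Quaternion.normSq_def']
  simp [Quaternion.re_coe, Quaternion.imI_coe, Quaternion.imJ_coe, Quaternion.imK_coe, hj.1]
  nlinarith [h1]

lemma orth_re {k l : ℍ} (hk : k.re = 0) (hl : l.re = 0) (h : (k * star l).re = 0) :
    k.imI*l.imI + k.imJ*l.imJ + k.imK*l.imK = 0 := by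
  simp [Quaternion.re_mul, hk, hl] at h
  linarith [h]

lemma quat_eq_zero_of_res {k l : ℍ} (hkl : OrthPair k l) (q : ℍ)
    (h1 : q.re = 0) (h2 : (q*k).re = 0) (h3 : (q*l).re = 0) (h4 : (q*(l*k)).re = 0) : q = 0 := by
  obtain ⟨hk, hl, ho⟩ := hkl
  have hkre := hk.1; have hlre := hl.1
  have hks := hk.sum_sq; have hls := hl.sum_sq
  have hklo := orth_re hkre hlre ho
  simp only [Quaternion.re_mul, hkre, hlre, h1, Quaternion.imI_mul, Quaternion.imJ_mul,
    Quaternion.imK_mul, mul_zero, zero_mul, zero_add, add_zero, zero_sub, sub_zero] at h2 h3 h4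
  set a1 := q.imI; set a2 := q.imJ; set a3 := q.imK
  set k1 := k.imI; set k2 := k.imJ; set k3 := k.imK
  set l1 := l.imI; set l2 := l.imJ; set l3 := l.imK
  have hsq : a1^2 + a2^2 + a3^2 = 0 := by
    linear_combination (-(a1*(l2*k3 - l3*k2) + a2*(l3*k1 - l1*k3) + a3*(l1*k2 - l2*k1)))*h4
      + (-((a1*l1+a2*l2+a3*l3)*(k1^2+k2^2+k3^2) - (l1*k1+l2*k2+l3*k3)*(a1*k1+a2*k2+a3*k3)))*h3
      + ((a1*l1+a2*l2+a3*l3)*(l1*k1+l2*k2+l3*k3) - (l1^2+l2^2+l3^2)*(a1*k1+a2*k2+a3*k3))*h2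
      + (-(a1^2+a2^2+a3^2)*(k1^2+k2^2+k3^2))*hls + (-(a1^2+a2^2+a3^2))*hks
      + ((a1^2+a2^2+a3^2)*(l1*k1+l2*k2+l3*k3))*hklo
  ext <;> simp only [Quaternion.re_zero, Quaternion.imI_zero, Quaternion.imJ_zero,
    Quaternion.imK_zero]
  · exact h1
  · nlinarith [hsq, sq_nonneg a1, sq_nonneg a2, sq_nonneg a3]
  · nlinarith [hsq, sq_nonneg a1, sq_nonneg a2, sq_nonneg a3]
  · nlinarith [hsq, sq_nonneg a1, sq_nonneg a2, sq_nonneg a3]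

/-- The real-linear slice embedding `z ↦ re z + im z • c`. -/
def psiC (c : ℍ) : ℂ →L[ℝ] ℍ :=
  LinearMap.toContinuousLinearMap
    { toFun := fun z => ((z.re : ℍ) + z.im • c)
      map_add' := by
        intro z w
        simp only [Complex.add_re, Complex.add_im, add_smul]
        push_cast
        abel
      map_smul' := by
        intro r z
        have hre : (r • z).re = r * z.re := by simp [Complex.real_smul, Complex.mul_re]
        have him : (r • z).im = r * z.im := by simp [Complex.real_smul, Complex.mul_im]
        simp only [RingHom.id_apply, hre, him, smul_add, smul_smul]
        congr 1
        rw [Quaternion.smul_coe] }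

@[simp] lemma psiC_apply (c : ℍ) (z : ℂ) : psiC c z = ((z.re : ℍ) + z.im • c) := rfl

lemma psiC_one (c : ℍ) : psiC c 1 = 1 := by simp
lemma psiC_I (c : ℍ) : psiC c Complex.I = c := by simp

/-- projection `q ↦ (q*a).re + (q*b).re * I`. -/
def piAB (a b : ℍ) : ℍ →L[ℝ] ℂ :=
  LinearMap.toContinuousLinearMap
    { toFun := fun q => (((q * a).re : ℂ) + ((q * b).re : ℝ) * Complex.I)
      map_add' := by
        intro q r
        simp only [add_mul, Quaternion.re_add]
        push_cast
        ring
      map_smul' := by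
        intro r q
        simp only [smul_mul_assoc, Quaternion.re_smul, smul_eq_mul, RingHom.id_apply,
          Complex.real_smul]
        push_cast
        ring }

@[simp] lemma piAB_apply (a b q : ℍ) :
    piAB a b q = (((q * a).re : ℂ) + ((q * b).re : ℝ) * Complex.I) := rfl

lemma re_cyc (k q a : ℍ) : ((k * q) * a).re = (q * (a * k)).re := by
  rw [re_mul_comm, ← mul_assoc, re_mul_comm]

lemma piAB_mulK {k : ℍ} (a b q : ℍ) (ha : a * k = -b) (hb : b * k = a) :
    piAB a b (k * q) = Complex.I * piAB a b q := by
  simp only [piAB_apply, re_cyc, ha, hb]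
  simp only [mul_neg, Quaternion.re_neg]
  push_cast
  linear_combination (-((q * b).re : ℂ)) * Complex.I_sq

lemma clm_ext_CI {M : Type*} [AddCommGroup M] [Module ℝ M] [TopologicalSpace M]
    [IsTopologicalAddGroup M] [ContinuousSMul ℝ M]
    {L1 L2 : ℂ →L[ℝ] M} (h1 : L1 1 = L2 1) (hI : L1 Complex.I = L2 Complex.I) : L1 = L2 := by
  ext z
  have hz : z = z.re • (1 : ℂ) + z.im • Complex.I := by
    simp [Complex.real_smul, Complex.re_add_im]
  rw [hz]
  simp only [map_add, ContinuousLinearMap.map_smul, h1, hI]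

lemma norm_slice {j : ℍ} (hj : Sph2 j) (x y : ℝ) :
    ‖(x : ℍ) + y • j‖ ^ 2 = x ^ 2 + y ^ 2 := by
  have h := normSq_slice hj x y
  rw [Quaternion.normSq_eq_norm_mul_self] at h
  rw [sq]; exact h

lemma mem_B4_slice {j : ℍ} (hj : Sph2 j) {x y : ℝ} (h : x ^ 2 + y ^ 2 < 1) :
    ((x : ℍ) + y • j) ∈ B4 := by
  have h2 := norm_slice hj x y
  have hn : (0:ℝ) ≤ ‖(x : ℍ) + y • j‖ := norm_nonneg _
  simp only [B4, Set.mem_setOf_eq]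
  nlinarith

lemma abs_re_le_norm (q : ℍ) : |q.re| ≤ ‖q‖ := by
  have h : q.re ^ 2 ≤ ‖q‖ ^ 2 := by
    have : ‖q‖ ^ 2 = Quaternion.normSq q := by
      rw [sq, Quaternion.normSq_eq_norm_mul_self]
    rw [this, Quaternion.normSq_def']
    nlinarith [sq_nonneg q.imI, sq_nonneg q.imJ, sq_nonneg q.imK]
  nlinarith [abs_nonneg q.re, norm_nonneg q, sq_abs q.re]

lemma sph2_of_normSq {j : ℍ} (hre : j.re = 0) (h : Quaternion.normSq j = 1) : Sph2 j := by
  refine ⟨hre, ?_⟩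
  have h2 := Quaternion.normSq_eq_norm_mul_self j
  nlinarith [norm_nonneg j]

def quatI : ℍ := ⟨0,1,0,0⟩

lemma diffAt_of_sliceReg {f : ℍ → ℍ} (hf : SliceRegularOn f B4) {q : ℍ} (hq : q ∈ B4) :
    DifferentiableAt ℝ f q := by
  by_cases h : q.im = 0
  · have hI : Sph2 quatI := by
      apply sph2_of_normSq rfl
      rw [Quaternion.normSq_def']
      show (0:ℝ)^2 + 1^2 + 0^2 + 0^2 = 1
      norm_num
    have hq2 : q = ((q.re : ℝ) : ℍ) + (0:ℝ) • quatI := by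
      rw [zero_smul, add_zero]
      conv_lhs => rw [← Quaternion.re_add_im q]
      rw [h, add_zero]
    rw [hq2] at hq ⊢
    exact (hf hI q.re 0 hq).1
  · have him : ‖q.im‖ ≠ 0 := norm_ne_zero_iff.mpr h
    set I : ℍ := ‖q.im‖⁻¹ • q.im with hI
    have hSI : Sph2 I := by
      constructor
      · rw [hI, Quaternion.re_smul, Quaternion.re_im, smul_zero]
      · rw [hI, norm_smul, norm_inv, norm_norm, inv_mul_cancel₀ him]
    have hq2 : q = ((q.re : ℝ) : ℍ) + ‖q.im‖ • I := by
      rw [hI, smul_smul, mul_inv_cancel₀ him, one_smul, Quaternion.re_add_im]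
    rw [hq2] at hq ⊢
    exact (hf hSI q.re ‖q.im‖ hq).1

lemma cr_rel {f : ℍ → ℍ} {j : ℍ} (hj : Sph2 j) {pt : ℍ}
    (hcr : fderiv ℝ f pt 1 + j * fderiv ℝ f pt j = 0) :
    fderiv ℝ f pt j = j * fderiv ℝ f pt 1 := by
  have h2 := congrArg (fun w => j * w) hcr
  simp only [mul_add, mul_zero] at h2
  rw [← mul_assoc, hj.mul_self, neg_one_mul] at h2
  exact (add_neg_eq_zero.mp h2).symm

set_option maxHeartbeats 1000000 in
lemma rep_formula {f : ℍ → ℍ} (hf : SliceRegularOn f B4) {i k l : ℍ} (hi : Sph2 i)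
    (hkl : OrthPair k l) {x y : ℝ} (hxy : x ^ 2 + y ^ 2 < 1) :
    f ((x:ℍ) + y • k)
      = (2⁻¹:ℝ) • (f ((x:ℍ) + y • i) + f ((x:ℍ) + (-y) • i))
        + (2⁻¹:ℝ) • ((k * i) * (f ((x:ℍ) + (-y) • i) - f ((x:ℍ) + y • i))) := by
  obtain ⟨hk, hl, ho⟩ := hkl
  set conjL : ℂ →L[ℝ] ℂ := (Complex.conjCLE : ℂ ≃L[ℝ] ℂ).toContinuousLinearMap with hconjL
  have conjL_apply : ∀ z : ℂ, conjL z = (starRingEnd ℂ) z := fun z => rfl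
  set W : ℂ → ℍ := fun z =>
    f (psiC k z) - (2⁻¹:ℝ) • (f (psiC i z) + f (psiC i (conjL z)))
      - (2⁻¹:ℝ) • ((k * i) * (f (psiC i (conjL z)) - f (psiC i z))) with hWdef
  have hball : ∀ z : ℂ, z ∈ Metric.ball (0:ℂ) 1 → z.re ^ 2 + z.im ^ 2 < 1 := by
    intro z hz
    rw [Metric.mem_ball, dist_zero_right] at hz
    have : ‖z‖ ^ 2 = z.re ^ 2 + z.im ^ 2 := by
      rw [Complex.sq_norm, Complex.normSq_apply]; ring
    nlinarith [norm_nonneg z]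
  have main : ∀ z ∈ Metric.ball (0:ℂ) 1,
      ∃ L : ℂ →L[ℝ] ℍ, HasFDerivAt W L z ∧ L Complex.I = k * L 1 := by
    intro z hz
    have hz2 := hball z hz
    have hz2' : z.re ^ 2 + (-z.im) ^ 2 < 1 := by rw [neg_pow]; simpa using hz2
    have hmemk : ((z.re : ℍ) + z.im • k) ∈ B4 := mem_B4_slice hk hz2
    have hmemi : ((z.re : ℍ) + z.im • i) ∈ B4 := mem_B4_slice hi hz2
    have hmemi' : ((z.re : ℍ) + (-z.im) • i) ∈ B4 := mem_B4_slice hi hz2'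
    obtain ⟨hdk, hcrk⟩ := hf hk z.re z.im hmemk
    obtain ⟨hdi, hcri⟩ := hf hi z.re z.im hmemi
    obtain ⟨hdi', hcri'⟩ := hf hi z.re (-z.im) hmemi'
    have hcz : conjL z = (⟨z.re, -z.im⟩ : ℂ) := by
      rw [conjL_apply]
      apply Complex.ext
      · simp
      · simp
    have hpsik : psiC k z = (z.re : ℍ) + z.im • k := rfl
    have hpsii : psiC i z = (z.re : ℍ) + z.im • i := rfl
    have hpsii' : psiC i (conjL z) = (z.re : ℍ) + (-z.im) • i := by
      rw [hcz]; rfl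
    set B := fderiv ℝ f ((z.re : ℍ) + z.im • k) with hB
    set A := fderiv ℝ f ((z.re : ℍ) + z.im • i) with hA
    set A' := fderiv ℝ f ((z.re : ℍ) + (-z.im) • i) with hA'
    have hFk : HasFDerivAt (fun w => f (psiC k w)) (B.comp (psiC k)) z := by
      refine HasFDerivAt.comp z ?_ (psiC k).hasFDerivAt
      exact hdk.hasFDerivAt
    have hFi : HasFDerivAt (fun w => f (psiC i w)) (A.comp (psiC i)) z := by
      refine HasFDerivAt.comp z ?_ (psiC i).hasFDerivAt
      exact hdi.hasFDerivAt
    have hFi'0 : HasFDerivAt (fun w => f (psiC i w)) (A'.comp (psiC i)) (conjL z) := by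
      refine HasFDerivAt.comp (conjL z) ?_ (psiC i).hasFDerivAt
      rw [hpsii']
      exact hdi'.hasFDerivAt
    have hFi' : HasFDerivAt (fun w => f (psiC i (conjL w)))
        ((A'.comp (psiC i)).comp conjL) z := hFi'0.comp z conjL.hasFDerivAt
    set mki : ℍ →L[ℝ] ℍ := ContinuousLinearMap.mul ℝ ℍ (k * i) with hmki
    have hFm : HasFDerivAt (fun w => (k * i) * (f (psiC i (conjL w)) - f (psiC i w)))
        (mki.comp ((A'.comp (psiC i)).comp conjL - A.comp (psiC i))) z :=
      mki.hasFDerivAt.comp z (hFi'.sub hFi)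
    refine ⟨B.comp (psiC k)
        - (2⁻¹:ℝ) • (A.comp (psiC i) + (A'.comp (psiC i)).comp conjL)
        - (2⁻¹:ℝ) • (mki.comp ((A'.comp (psiC i)).comp conjL - A.comp (psiC i))), ?_, ?_⟩
    · exact (hFk.sub ((hFi.add hFi').const_smul (2⁻¹:ℝ))).sub (hFm.const_smul (2⁻¹:ℝ))
    · have hconj1 : conjL (1:ℂ) = 1 := by rw [conjL_apply]; simp
      have hconjI : conjL Complex.I = -Complex.I := by rw [conjL_apply]; simp
      have hBk : B k = k * B 1 := cr_rel hk hcrk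
      have hAi : A i = i * A 1 := cr_rel hi hcri
      have hAi' : A' i = i * A' 1 := cr_rel hi hcri'
      simp only [ContinuousLinearMap.coe_sub', Pi.sub_apply, ContinuousLinearMap.coe_smul',
        Pi.smul_apply, ContinuousLinearMap.add_apply, ContinuousLinearMap.coe_comp',
        Function.comp_apply, hconj1, hconjI, map_neg, psiC_one, psiC_I, hmki,
        ContinuousLinearMap.mul_apply', hBk, hAi, hAi']
      have hisq : ∀ X : ℍ, i * (i * X) = -X := by
        intro X; rw [← mul_assoc, hi.mul_self, neg_one_mul]
      have hksq : ∀ X : ℍ, k * (k * X) = -X := by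
        intro X; rw [← mul_assoc, hk.mul_self, neg_one_mul]
      simp only [mul_sub, mul_add, mul_neg, smul_sub, smul_add, smul_neg, mul_assoc, hisq, hksq,
        neg_neg, sub_neg_eq_add, neg_sub]
      simp only [mul_smul_comm, hksq, hisq, smul_neg, neg_smul, neg_neg]
      abel
  have hol : ∀ (a b : ℍ), a * k = -b → b * k = a →
      Set.EqOn (fun w => piAB a b (W w)) 0 (Metric.ball (0:ℂ) 1) := by
    intro a b ha hb
    have hdiff : DifferentiableOn ℂ (fun w => piAB a b (W w)) (Metric.ball (0:ℂ) 1) := by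
      intro z hz
      obtain ⟨L, hL, hLI⟩ := main z hz
      have hG : HasFDerivAt (fun w => piAB a b (W w)) ((piAB a b).comp L) z :=
        (piAB a b).hasFDerivAt.comp z hL
      set C : ℂ →L[ℂ] ℂ :=
        ContinuousLinearMap.smulRight (1 : ℂ →L[ℂ] ℂ) (piAB a b (L 1)) with hC
      have hCR : C.restrictScalars ℝ = (piAB a b).comp L := by
        apply clm_ext_CI
        · simp [hC]
        · have hkey : piAB a b (L Complex.I) = Complex.I * piAB a b (L 1) := by
            rw [hLI, piAB_mulK a b _ ha hb]
          simp [hC, hkey, smul_eq_mul]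
      exact (hasFDerivAt_of_restrictScalars ℝ hG hCR).differentiableAt.differentiableWithinAt
    have hana := hdiff.analyticOnNhd Metric.isOpen_ball
    apply hana.eqOn_zero_of_preconnected_of_frequently_eq_zero
      (convex_ball (0:ℂ) 1).isPreconnected (Metric.mem_ball_self one_pos)
    have hWreal : ∀ t : ℝ, W (t : ℂ) = 0 := by
      intro t
      have hct : conjL (t : ℂ) = (t : ℂ) := by rw [conjL_apply, Complex.conj_ofReal]
      have hpt : psiC k (t:ℂ) = psiC i (t:ℂ) := by simp
      simp only [hWdef, hct, hpt]
      set X := f (psiC i (t:ℂ))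
      rw [sub_self, mul_zero, smul_zero, sub_zero]
      module
    have hseq : Filter.Tendsto (fun n : ℕ => ((1 / (n + 1) : ℝ) : ℂ)) Filter.atTop
        (nhdsWithin 0 {z : ℂ | z ≠ 0}) := by
      rw [tendsto_nhdsWithin_iff]
      constructor
      · have h1 := tendsto_one_div_add_atTop_nhds_zero_nat (𝕜 := ℝ)
        have h2 := (Complex.continuous_ofReal.tendsto 0).comp h1
        simpa [Function.comp_def, one_div] using h2
      · apply Filter.Eventually.of_forall
        intro n
        simp only [Set.mem_setOf_eq, ne_eq, Complex.ofReal_eq_zero]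
        positivity
    apply hseq.frequently
    apply Filter.Frequently.of_forall
    intro n
    simp only [hWreal, map_zero, Pi.zero_apply]
  set z0 : ℂ := ⟨x, y⟩ with hz0def
  have hz0 : z0 ∈ Metric.ball (0:ℂ) 1 := by
    rw [Metric.mem_ball, dist_zero_right]
    have h2 : ‖z0‖ ^ 2 = x ^ 2 + y ^ 2 := by
      rw [Complex.sq_norm, Complex.normSq_apply]
      show x * x + y * y = _
      ring
    nlinarith [norm_nonneg z0, hxy]
  have h1 := hol 1 (-k) (by rw [one_mul, neg_neg]) (by rw [neg_mul, hk.mul_self, neg_neg]) hz0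
  have h2 := hol (-l) (l * k) (by rw [neg_mul]) (by rw [mul_assoc, hk.mul_self, mul_neg_one]) hz0
  have e1 : piAB 1 (-k) (W z0) = 0 := h1
  have e2 : piAB (-l) (l*k) (W z0) = 0 := h2
  rw [piAB_apply] at e1 e2
  have e1re := congrArg Complex.re e1
  have e1im := congrArg Complex.im e1
  have e2re := congrArg Complex.re e2
  have e2im := congrArg Complex.im e2
  simp only [Complex.add_re, Complex.ofReal_re, Complex.mul_re, Complex.I_re, Complex.I_im,
    Complex.ofReal_im, Complex.add_im, Complex.mul_im, Complex.zero_re, Complex.zero_im,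
    mul_zero, mul_one, zero_mul, zero_add, add_zero, sub_zero, zero_sub] at e1re e1im e2re e2im
  have hW0 : W z0 = 0 := by
    apply quat_eq_zero_of_res ⟨hk, hl, ho⟩ (W z0)
    · exact e1re
    · have : (W z0 * -k).re = 0 := by linarith [e1im]
      rw [mul_neg, Quaternion.re_neg] at this; linarith [this]
    · have : (W z0 * -l).re = 0 := e2re
      rw [mul_neg, Quaternion.re_neg] at this; linarith [this]
    · exact e2im
  rw [hWdef] at hW0
  have hc0 : conjL z0 = (⟨x, -y⟩ : ℂ) := by
    rw [conjL_apply]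
    apply Complex.ext
    · simp [hz0def]
    · simp [hz0def]
  simp only [hc0, psiC_apply] at hW0
  have h3 := sub_eq_zero.mp hW0
  have h4 := sub_eq_iff_eq_add.mp h3
  rw [h4]
  abel

lemma isOpen_unitDisk : IsOpen unitDisk := by
  have : unitDisk = (fun p : ℝ × ℝ => p.1 ^ 2 + p.2 ^ 2) ⁻¹' (Set.Iio 1) := rfl
  rw [this]
  exact (((continuous_fst.pow 2).add (continuous_snd.pow 2))).isOpen_preimage _ isOpen_Iio

def reflT : ℝ × ℝ → ℝ × ℝ := Prod.map id Neg.neg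

lemma reflT_measurePreserving : MeasurePreserving reflT volume volume :=
  (MeasurePreserving.id volume).prod (Measure.measurePreserving_neg volume)

lemma reflT_measurableEmbedding : MeasurableEmbedding reflT := by
  have h : reflT = fun p : ℝ × ℝ => (p.1, -p.2) := rfl
  have e : Homeomorph ((ℝ × ℝ)) ((ℝ × ℝ)) :=
    (Homeomorph.refl ℝ).prodCongr (Homeomorph.neg ℝ)
  exact ((Homeomorph.refl ℝ).prodCongr (Homeomorph.neg ℝ)).measurableEmbedding

lemma reflT_preimage : reflT ⁻¹' unitDisk = unitDisk := by
  ext p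
  simp only [unitDisk, Set.mem_preimage, Set.mem_setOf_eq, reflT, Prod.map, id]
  rw [neg_pow]
  simp

lemma integral_reflT (g : ℝ × ℝ → ℝ) :
    ∫ p in unitDisk, g (reflT p) = ∫ p in unitDisk, g p := by
  have := reflT_measurePreserving.setIntegral_preimage_emb reflT_measurableEmbedding g unitDisk
  rwa [reflT_preimage] at this

lemma integrableOn_reflT (g : ℝ × ℝ → ℝ) (hg : IntegrableOn g unitDisk) :
    IntegrableOn (fun p => g (reflT p)) unitDisk := by
  have := (reflT_measurePreserving.integrableOn_comp_preimage
    reflT_measurableEmbedding (f := g) (s := unitDisk)).mpr hg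
  rwa [reflT_preimage] at this

lemma continuousOn_slice {f : ℍ → ℍ} (hf : SliceRegularOn f B4) {j : ℍ} (hj : Sph2 j) :
    ContinuousOn (fun p : ℝ × ℝ => f ((p.1 : ℍ) + p.2 • j)) unitDisk := by
  intro p hp
  have hmem : ((p.1 : ℍ) + p.2 • j) ∈ B4 := mem_B4_slice hj hp
  have hcont : ContinuousAt f ((p.1 : ℍ) + p.2 • j) :=
    (diffAt_of_sliceReg hf hmem).continuousAt
  have hmap : Continuous (fun p : ℝ × ℝ => ((p.1 : ℍ) + p.2 • j)) :=
    (Quaternion.continuous_coe.comp continuous_fst).add (continuous_snd.smul continuous_const)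
  have hc2 : ContinuousAt (f ∘ (fun p : ℝ × ℝ => ((p.1 : ℍ) + p.2 • j))) p :=
    ContinuousAt.comp (by exact hcont) hmap.continuousAt
  exact hc2.continuousWithinAt

lemma norm_slice_bound {f : ℍ → ℍ} (hf : SliceRegularOn f B4) {i k l : ℍ} (hi : Sph2 i)
    (hkl : OrthPair k l) {p : ℝ × ℝ} (hp : p ∈ unitDisk) :
    ‖f ((p.1 : ℍ) + p.2 • k)‖ ≤
      ‖f ((p.1 : ℍ) + p.2 • i)‖ + ‖f ((p.1 : ℍ) + (-p.2) • i)‖ := by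
  have hrep := rep_formula hf hi hkl (x := p.1) (y := p.2) hp
  rw [hrep]
  set u := f ((p.1 : ℍ) + p.2 • i)
  set v := f ((p.1 : ℍ) + (-p.2) • i)
  have h1 : ‖(2⁻¹:ℝ) • (u + v)‖ ≤ 2⁻¹ * (‖u‖ + ‖v‖) := by
    rw [norm_smul]
    have := norm_add_le u v
    simp only [Real.norm_eq_abs]
    rw [abs_of_pos (by norm_num : (0:ℝ) < 2⁻¹)]
    nlinarith
  have h2 : ‖(2⁻¹:ℝ) • ((k * i) * (v - u))‖ ≤ 2⁻¹ * (‖u‖ + ‖v‖) := by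
    rw [norm_smul, norm_mul, norm_mul, hi.2, (hkl.1).2, one_mul, one_mul]
    have := norm_sub_le v u
    simp only [Real.norm_eq_abs]
    rw [abs_of_pos (by norm_num : (0:ℝ) < 2⁻¹)]
    nlinarith
  calc ‖(2⁻¹:ℝ) • (u + v) + (2⁻¹:ℝ) • ((k * i) * (v - u))‖
      ≤ ‖(2⁻¹:ℝ) • (u + v)‖ + ‖(2⁻¹:ℝ) • ((k * i) * (v - u))‖ := norm_add_le _ _
    _ ≤ 2⁻¹ * (‖u‖ + ‖v‖) + 2⁻¹ * (‖u‖ + ‖v‖) := add_le_add h1 h2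
    _ = ‖u‖ + ‖v‖ := by ring

lemma sq_integral_bound {f : ℍ → ℍ} (hf : SliceRegularOn f B4) {i k l : ℍ} (hi : Sph2 i)
    (hkl : OrthPair k l)
    (hint : IntegrableOn (fun p : ℝ × ℝ => ‖f ((p.1:ℍ) + p.2 • i)‖ ^ 2) unitDisk)
    (e : ℝ × ℝ → ℝ) (he : ContinuousOn e unitDisk)
    (hbd : ∀ p ∈ unitDisk, |e p| ≤ ‖f ((p.1:ℍ) + p.2 • k)‖) :
    IntegrableOn (fun p => e p ^ 2) unitDisk ∧
      ∫ p in unitDisk, e p ^ 2 ≤ 4 * ∫ p in unitDisk, ‖f ((p.1:ℍ) + p.2 • i)‖ ^ 2 := by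
  set a : ℝ × ℝ → ℝ := fun p => ‖f ((p.1:ℍ) + p.2 • i)‖ with ha
  set b : ℝ × ℝ → ℝ := fun p => ‖f ((p.1:ℍ) + (-p.2) • i)‖ with hb
  have hbint : IntegrableOn (fun p => b p ^ 2) unitDisk := by
    have h2 := integrableOn_reflT (fun p => a p ^ 2) hint
    exact h2
  have hbeq : ∫ p in unitDisk, b p ^ 2 = ∫ p in unitDisk, a p ^ 2 :=
    integral_reflT (fun p => a p ^ 2)
  have hm : IntegrableOn (fun p => 2 * a p ^ 2 + 2 * b p ^ 2) unitDisk :=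
    (hint.const_mul 2).add (hbint.const_mul 2)
  have hpt : ∀ p ∈ unitDisk, e p ^ 2 ≤ 2 * a p ^ 2 + 2 * b p ^ 2 := by
    intro p hp
    have h1 := hbd p hp
    have h2 := norm_slice_bound hf hi hkl hp
    have h3 : |e p| ≤ a p + b p := le_trans h1 h2
    have h4 : e p ^ 2 ≤ (a p + b p) ^ 2 := by
      nlinarith [abs_nonneg (e p), sq_abs (e p), norm_nonneg (f ((p.1:ℍ) + p.2 • i)),
        norm_nonneg (f ((p.1:ℍ) + (-p.2) • i))]
    nlinarith [sq_nonneg (a p - b p)]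
  have hmeas : AEStronglyMeasurable (fun p => e p ^ 2) (volume.restrict unitDisk) :=
    ((he.pow 2)).aestronglyMeasurable isOpen_unitDisk.measurableSet
  have heint : IntegrableOn (fun p => e p ^ 2) unitDisk := by
    apply Integrable.mono hm hmeas
    apply (ae_restrict_iff' isOpen_unitDisk.measurableSet).2
    apply Filter.Eventually.of_forall
    intro p hp
    rw [Real.norm_eq_abs, Real.norm_eq_abs, abs_of_nonneg (sq_nonneg _),
      abs_of_nonneg (by positivity)]
    exact hpt p hp
  refine ⟨heint, ?_⟩
  have hmono : ∫ p in unitDisk, e p ^ 2 ≤ ∫ p in unitDisk, (2 * a p ^ 2 + 2 * b p ^ 2) :=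
    setIntegral_mono_on heint hm isOpen_unitDisk.measurableSet hpt
  have hsplit : ∫ p in unitDisk, (2 * a p ^ 2 + 2 * b p ^ 2)
      = 2 * (∫ p in unitDisk, a p ^ 2) + 2 * (∫ p in unitDisk, b p ^ 2) := by
    rw [integral_add (hint.const_mul 2) (hbint.const_mul 2),
      MeasureTheory.integral_const_mul, MeasureTheory.integral_const_mul]
  rw [hsplit, hbeq] at hmono
  linarith [hmono]

/-- The section map `S_{k,l} : A_i(𝔹⁴) → HL(D)` is continuous. -/
theorem section_continuous (i k l : ℍ) (hi : Sph2 i) (hkl : OrthPair k l) :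
    ∀ f : ℍ → ℍ, MemBergB i f → ∀ ε : ℝ, 0 < ε → ∃ δ : ℝ, 0 < δ ∧
      ∀ g : ℍ → ℍ, MemBergB i g → bergNormB i (f - g) < δ →
        HLdist (Smap f k l) (Smap g k l) < ε := by
  have hk := hkl.1
  have hl := hkl.2.1
  intro f hfmem ε hε
  refine ⟨ε / 9, by positivity, ?_⟩
  intro g hgmem hdist
  set h : ℍ → ℍ := f - g with hh
  have hreg : SliceRegularOn h B4 := by
    intro j hj x y hm
    obtain ⟨hd1, hc1⟩ := hfmem.1 hj x y hm
    obtain ⟨hd2, hc2⟩ := hgmem.1 hj x y hm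
    refine ⟨hd1.sub hd2, ?_⟩
    have hfd : fderiv ℝ h ((x:ℍ) + y • j)
        = fderiv ℝ f ((x:ℍ) + y • j) - fderiv ℝ g ((x:ℍ) + y • j) := fderiv_sub hd1 hd2
    rw [hfd]
    simp only [ContinuousLinearMap.coe_sub', Pi.sub_apply]
    calc fderiv ℝ f ((x:ℍ) + y • j) 1 - fderiv ℝ g ((x:ℍ) + y • j) 1
          + j * (fderiv ℝ f ((x:ℍ) + y • j) j - fderiv ℝ g ((x:ℍ) + y • j) j)
        = (fderiv ℝ f ((x:ℍ) + y • j) 1 + j * fderiv ℝ f ((x:ℍ) + y • j) j)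
          - (fderiv ℝ g ((x:ℍ) + y • j) 1 + j * fderiv ℝ g ((x:ℍ) + y • j) j) := by
          rw [mul_sub]; abel
      _ = 0 := by rw [hc1, hc2, sub_zero]
  have hcont_h : ContinuousOn (fun p : ℝ × ℝ => h ((p.1:ℍ) + p.2 • i)) unitDisk :=
    continuousOn_slice hreg hi
  have hint : IntegrableOn (fun p : ℝ × ℝ => ‖h ((p.1:ℍ) + p.2 • i)‖ ^ 2) unitDisk := by
    apply Integrable.mono (((hfmem.2).const_mul 2).add ((hgmem.2).const_mul 2))
      ((hcont_h.norm.pow 2).aestronglyMeasurable isOpen_unitDisk.measurableSet)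
    apply (ae_restrict_iff' isOpen_unitDisk.measurableSet).2
    apply Filter.Eventually.of_forall
    intro p _
    have h1 : ‖h ((p.1:ℍ) + p.2 • i)‖ ≤ ‖f ((p.1:ℍ) + p.2 • i)‖ + ‖g ((p.1:ℍ) + p.2 • i)‖ := by
      have : h ((p.1:ℍ) + p.2 • i) = f ((p.1:ℍ) + p.2 • i) - g ((p.1:ℍ) + p.2 • i) := rfl
      rw [this]; exact norm_sub_le _ _
    simp only [Pi.add_apply, Pi.pow_apply]
    rw [Real.norm_eq_abs, Real.norm_eq_abs, abs_of_nonneg (by positivity),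
      abs_of_nonneg (by positivity)]
    nlinarith [norm_nonneg (h ((p.1:ℍ) + p.2 • i)), norm_nonneg (f ((p.1:ℍ) + p.2 • i)),
      norm_nonneg (g ((p.1:ℍ) + p.2 • i)),
      sq_nonneg (‖f ((p.1:ℍ) + p.2 • i)‖ - ‖g ((p.1:ℍ) + p.2 • i)‖),
      mul_self_le_mul_self (norm_nonneg (h ((p.1:ℍ) + p.2 • i))) h1]
  set S : ℝ := ∫ p in unitDisk, ‖h ((p.1:ℍ) + p.2 • i)‖ ^ 2 with hS
  have hSnn : 0 ≤ S := by
    apply setIntegral_nonneg isOpen_unitDisk.measurableSet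
    intro p _; positivity
  have hSlt : Real.sqrt S < ε / 9 := hdist
  have key : ∀ c : ℍ, ‖c‖ = 1 →
      Real.sqrt (∫ p in unitDisk, ((h ((p.1:ℍ) + p.2 • k)) * c).re ^ 2) < 2 * (ε / 9) := by
    intro c hc
    set e : ℝ × ℝ → ℝ := fun p => ((h ((p.1:ℍ) + p.2 • k)) * c).re with he
    have hecont : ContinuousOn e unitDisk :=
      Quaternion.continuous_re.comp_continuousOn
        ((continuousOn_slice hreg hk).mul continuousOn_const)
    have hbd : ∀ p ∈ unitDisk, |e p| ≤ ‖h ((p.1:ℍ) + p.2 • k)‖ := by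
      intro p _
      have h1 := abs_re_le_norm ((h ((p.1:ℍ) + p.2 • k)) * c)
      rw [norm_mul, hc, mul_one] at h1
      exact h1
    obtain ⟨hei, hle⟩ := sq_integral_bound hreg hi hkl hint e hecont hbd
    have h2 : Real.sqrt (∫ p in unitDisk, e p ^ 2) ≤ Real.sqrt (4 * S) :=
      Real.sqrt_le_sqrt hle
    have h3 : Real.sqrt (4 * S) = 2 * Real.sqrt S := by
      rw [show (4:ℝ) = 2 ^ 2 by norm_num, Real.sqrt_mul (by positivity) S,
        Real.sqrt_sq (by norm_num : (0:ℝ) ≤ 2)]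
    calc Real.sqrt (∫ p in unitDisk, e p ^ 2) ≤ 2 * Real.sqrt S := by rw [← h3]; exact h2
      _ < 2 * (ε / 9) := by linarith [hSlt]
  have hterm1 : L2D ((Smap f k l).a - (Smap g k l).a) < 2 * (ε / 9) := by
    have hfun : ((Smap f k l).a - (Smap g k l).a)
        = fun p => ((h ((p.1:ℍ) + p.2 • k)) * 1).re := by
      funext p
      simp only [Smap, Pi.sub_apply, Dc1, Qsl, mul_one, hh, Quaternion.re_sub]
    rw [L2D, hfun]
    exact key 1 (by simp)
  have hterm2 : L2D ((Smap f k l).b - (Smap g k l).b) < 2 * (ε / 9) := by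
    have hfun : ((Smap f k l).b - (Smap g k l).b)
        = fun p => ((h ((p.1:ℍ) + p.2 • k)) * (-k)).re := by
      funext p
      simp only [Smap, Pi.sub_apply, Dc2, Qsl, hh, mul_neg, Quaternion.re_neg, Pi.sub_apply,
        sub_mul, Quaternion.re_sub]
      ring
    rw [L2D, hfun]
    exact key (-k) (by rw [norm_neg]; exact hk.2)
  have hterm3 : L2D ((Smap f k l).c - (Smap g k l).c) < 2 * (ε / 9) := by
    have hfun : ((Smap f k l).c - (Smap g k l).c)
        = fun p => ((h ((p.1:ℍ) + p.2 • k)) * (-l)).re := by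
      funext p
      simp only [Smap, Pi.sub_apply, Dc3, Qsl, hh, mul_neg, Quaternion.re_neg, Pi.sub_apply,
        sub_mul, Quaternion.re_sub]
      ring
    rw [L2D, hfun]
    exact key (-l) (by rw [norm_neg]; exact hl.2)
  have hterm4 : L2D ((Smap f k l).d - (Smap g k l).d) < 2 * (ε / 9) := by
    have hfun : ((Smap f k l).d - (Smap g k l).d)
        = fun p => ((h ((p.1:ℍ) + p.2 • k)) * (l * k)).re := by
      funext p
      simp only [Smap, Pi.sub_apply, Dc4, Qsl, hh, Pi.sub_apply, sub_mul, Quaternion.re_sub]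
    rw [L2D, hfun]
    exact key (l * k) (by rw [norm_mul, hl.2, hk.2, mul_one])
  have hterm5 : Real.sqrt (‖(Smap f k l).k - (Smap g k l).k‖ ^ 2
      + ‖(Smap f k l).l - (Smap g k l).l‖ ^ 2) = 0 := by
    simp only [Smap, sub_self, norm_zero]
    norm_num
  rw [HLdist, hterm5]
  linarith [hterm1, hterm2, hterm3, hterm4]
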